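/- Preservation for references with stores: if ∅ | Σ ⊢ t : T, μ is well typed w.r.t. Σ, and t | μ ⟶ t' | μ', then there exists a store typing Σ' ⊇ Σ such that ∅ | Σ' ⊢ t' : T and μ' is well typed w.r.t. Σ'. -/

import Mathlib

/-- Types: unit, function types, and reference types T ref. -/
inductive Ty : Type where
  | unit : Ty
  | arrow : Ty → Ty → Ty
  | ref : Ty → Ty
deriving DecidableEq

/-- Terms: the lambda calculus extended with unit, `ref t`, dereference `$t`,
assignment `t₁ := t₂`, and store locations. -/
inductive Tm : Type where
  | var : String → Tm
  | abs : String → Ty → Tm → Tm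
  | app : Tm → Tm → Tm
  | unit : Tm
  | ref : Tm → Tm
  | deref : Tm → Tm
  | assign : Tm → Tm → Tm
  | loc : Nat → Tm

/-- Values: unit, abstractions, and store locations. -/
inductive Value : Tm → Prop where
  | unit : Value .unit
  | abs : ∀ x T t, Value (.abs x T t)
  | loc : ∀ l, Value (.loc l)

def Ctx : Type := String → Option Ty

def Ctx.update (Γ : Ctx) (x : String) (T : Ty) : Ctx :=
  fun y => if y = x then some T else Γ y

def emptyCtx : Ctx := fun _ => none

/-- Stores map locations to terms (which will be values). -/
abbrev Store : Type := List Tm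

/-- Store typings map locations to types. -/
abbrev StoreTy : Type := List Ty

/-- The typing judgment Γ | S ⊢ t : T with rules T-Var, T-Abs, T-App, T-Unit,
T-Ref, T-Deref, T-Assign, T-Loc. -/
inductive HasType : Ctx → StoreTy → Tm → Ty → Prop where
  | var : ∀ Γ S x T, Γ x = some T → HasType Γ S (.var x) T
  | abs : ∀ Γ S x T₁ T₂ t₂, HasType (Ctx.update Γ x T₁) S t₂ T₂ →
      HasType Γ S (.abs x T₁ t₂) (.arrow T₁ T₂)
  | app : ∀ Γ S t₁ t₂ T₁₁ T₁₂, HasType Γ S t₁ (.arrow T₁₁ T₁₂) → HasType Γ S t₂ T₁₁ →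
      HasType Γ S (.app t₁ t₂) T₁₂
  | unit : ∀ Γ S, HasType Γ S .unit .unit
  | ref : ∀ Γ S t T, HasType Γ S t T → HasType Γ S (.ref t) (.ref T)
  | deref : ∀ Γ S t T, HasType Γ S t (.ref T) → HasType Γ S (.deref t) T
  | assign : ∀ Γ S t₁ t₂ T, HasType Γ S t₁ (.ref T) → HasType Γ S t₂ T →
      HasType Γ S (.assign t₁ t₂) .unit
  | loc : ∀ Γ (S : StoreTy) l (h : l < S.length), HasType Γ S (.loc l) (.ref S[l])

/-- A store μ is well typed with respect to a store typing S: same domain, and each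
stored term is a value of the corresponding type. -/
def StoreWellTyped (μ : Store) (S : StoreTy) : Prop :=
  μ.length = S.length ∧
  ∀ l (h₁ : l < μ.length) (h₂ : l < S.length), Value μ[l] ∧ HasType emptyCtx S μ[l] S[l]

def subst (x : String) (s : Tm) : Tm → Tm
  | .var y => if y = x then s else .var y
  | .abs y T t => if y = x then .abs y T t else .abs y T (subst x s t)
  | .app t₁ t₂ => .app (subst x s t₁) (subst x s t₂)
  | .unit => .unit
  | .ref t => .ref (subst x s t)
  | .deref t => .deref (subst x s t)
  | .assign t₁ t₂ => .assign (subst x s t₁) (subst x s t₂)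
  | .loc l => .loc l

/-- Small-step evaluation over configurations t | μ. -/
inductive Step : Tm → Store → Tm → Store → Prop where
  | app1 : ∀ t₁ t₁' t₂ μ μ', Step t₁ μ t₁' μ' → Step (.app t₁ t₂) μ (.app t₁' t₂) μ'
  | app2 : ∀ v₁ t₂ t₂' μ μ', Value v₁ → Step t₂ μ t₂' μ' → Step (.app v₁ t₂) μ (.app v₁ t₂') μ'
  | appAbs : ∀ x T t₁ v μ, Value v → Step (.app (.abs x T t₁) v) μ (subst x v t₁) μ
  | refCong : ∀ t t' μ μ', Step t μ t' μ' → Step (.ref t) μ (.ref t') μ'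
  | refV : ∀ v μ, Value v → Step (.ref v) μ (.loc μ.length) (μ ++ [v])
  | derefCong : ∀ t t' μ μ', Step t μ t' μ' → Step (.deref t) μ (.deref t') μ'
  | derefLoc : ∀ (μ : Store) l (h : l < μ.length), Step (.deref (.loc l)) μ μ[l] μ
  | assign1 : ∀ t₁ t₁' t₂ μ μ', Step t₁ μ t₁' μ' → Step (.assign t₁ t₂) μ (.assign t₁' t₂) μ'
  | assign2 : ∀ v₁ t₂ t₂' μ μ', Value v₁ → Step t₂ μ t₂' μ' →
      Step (.assign v₁ t₂) μ (.assign v₁ t₂') μ'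
  | assign : ∀ l v (μ : Store), Value v → l < μ.length →
      Step (.assign (.loc l) v) μ .unit (μ.set l v)

lemma store_weaken {Γ S S' t T} (hp : S <+: S') (h : HasType Γ S t T) :
    HasType Γ S' t T := by
  induction h with
  | var _ _ _ _ hx => exact .var _ _ _ _ hx
  | abs _ _ _ _ _ _ _ ih => exact .abs _ _ _ _ _ _ (ih hp)
  | app _ _ _ _ _ _ _ _ ih1 ih2 => exact .app _ _ _ _ _ _ (ih1 hp) (ih2 hp)
  | unit => exact .unit _ _
  | ref _ _ _ _ _ ih => exact .ref _ _ _ _ (ih hp)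
  | deref _ _ _ _ _ ih => exact .deref _ _ _ _ (ih hp)
  | assign _ _ _ _ _ _ _ ih1 ih2 => exact .assign _ _ _ _ _ (ih1 hp) (ih2 hp)
  | loc Γ S l h =>
      have hl : l < S'.length := lt_of_lt_of_le h hp.length_le
      rw [hp.getElem h]
      exact .loc _ _ _ hl

def CtxLe (Γ Γ' : Ctx) : Prop := ∀ x T, Γ x = some T → Γ' x = some T

lemma ctx_weaken {Γ Γ' S t T} (h : HasType Γ S t T) (hle : CtxLe Γ Γ') :
    HasType Γ' S t T := by
  induction h generalizing Γ' with
  | var _ _ x T hx => exact .var _ _ _ _ (hle x T hx)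
  | abs _ _ x T₁ _ _ _ ih =>
      refine .abs _ _ _ _ _ _ (ih ?_)
      intro y U hy
      simp only [Ctx.update] at hy ⊢
      by_cases h : y = x
      · simpa [h] using hy
      · simp only [h, if_false] at hy ⊢
        exact hle y U hy
  | app _ _ _ _ _ _ _ _ ih1 ih2 => exact .app _ _ _ _ _ _ (ih1 hle) (ih2 hle)
  | unit => exact .unit _ _
  | ref _ _ _ _ _ ih => exact .ref _ _ _ _ (ih hle)
  | deref _ _ _ _ _ ih => exact .deref _ _ _ _ (ih hle)
  | assign _ _ _ _ _ _ _ ih1 ih2 => exact .assign _ _ _ _ _ (ih1 hle) (ih2 hle)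
  | loc _ _ l h => exact .loc _ _ _ h

lemma empty_ctx_le (Γ : Ctx) : CtxLe emptyCtx Γ := by
  intro x T hx; simp [emptyCtx] at hx

lemma subst_pres {Γ' S t T} (h : HasType Γ' S t T) :
    ∀ {x U v Γ}, Γ' = Ctx.update Γ x U → HasType emptyCtx S v U →
      HasType Γ S (subst x v t) T := by
  induction h with
  | var Γ'' _ y T hy =>
      intro x U v Γ hΓ hv
      subst hΓ
      simp only [subst]
      by_cases hyx : y = x
      · subst hyx
        simp only [Ctx.update, if_pos rfl] at hy
        cases hy
        rw [if_pos rfl]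
        exact ctx_weaken hv (empty_ctx_le Γ)
      · simp only [hyx, if_false]
        simp only [Ctx.update, if_neg hyx] at hy
        exact .var _ _ _ _ hy
  | abs _ _ y T₁ T₂ t₂ hb ih =>
      intro x U v Γ hΓ hv
      subst hΓ
      simp only [subst]
      by_cases hyx : y = x
      · subst hyx
        simp only [if_pos rfl]
        refine .abs _ _ _ _ _ _ (ctx_weaken hb ?_)
        intro z W hz
        simp only [Ctx.update] at *
        split at hz <;> split <;> simp_all [Ctx.update]
      · simp only [hyx, if_false]
        refine .abs _ _ _ _ _ _ (ih ?_ hv)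
        funext z
        simp only [Ctx.update]
        by_cases hzy : z = y <;> by_cases hzx : z = x <;> simp_all
  | app _ _ _ _ _ _ _ _ ih1 ih2 =>
      intro x U v Γ hΓ hv
      exact .app _ _ _ _ _ _ (ih1 hΓ hv) (ih2 hΓ hv)
  | unit => intro x U v Γ hΓ hv; exact .unit _ _
  | ref _ _ _ _ _ ih => intro x U v Γ hΓ hv; exact .ref _ _ _ _ (ih hΓ hv)
  | deref _ _ _ _ _ ih => intro x U v Γ hΓ hv; exact .deref _ _ _ _ (ih hΓ hv)
  | assign _ _ _ _ _ _ _ ih1 ih2 =>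
      intro x U v Γ hΓ hv
      exact .assign _ _ _ _ _ (ih1 hΓ hv) (ih2 hΓ hv)
  | loc _ _ l h => intro x U v Γ hΓ hv; exact .loc _ _ _ h

/-- Preservation for references: stepping a well-typed configuration yields a term
well typed at the same type under some extension S' of the store typing, with the
new store well typed w.r.t. S'. -/
theorem preservation_ref (t t' : Tm) (T : Ty) (S : StoreTy) (μ μ' : Store)
    (ht : HasType emptyCtx S t T) (hμ : StoreWellTyped μ S)
    (hs : Step t μ t' μ') :
    ∃ S' : StoreTy, S <+: S' ∧ HasType emptyCtx S' t' T ∧ StoreWellTyped μ' S' := by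
  induction hs generalizing T with
  | app1 t₁ t₁' t₂ μ μ' hstep ih =>
      cases ht with
      | app _ _ _ _ T₁₁ T₁₂ h1 h2 =>
        obtain ⟨S', hp, ht', hμ'⟩ := ih _ h1 hμ
        exact ⟨S', hp, .app _ _ _ _ _ _ ht' (store_weaken hp h2), hμ'⟩
  | app2 v₁ t₂ t₂' μ μ' hv hstep ih =>
      cases ht with
      | app _ _ _ _ T₁₁ T₁₂ h1 h2 =>
        obtain ⟨S', hp, ht', hμ'⟩ := ih _ h2 hμ
        exact ⟨S', hp, .app _ _ _ _ _ _ (store_weaken hp h1) ht', hμ'⟩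
  | appAbs x T₀ t₁ v μ hv =>
      cases ht with
      | app _ _ _ _ T₁₁ T₁₂ h1 h2 =>
        cases h1 with
        | abs _ _ _ _ _ _ hb =>
          exact ⟨S, List.prefix_refl S, subst_pres hb rfl h2, hμ⟩
  | refCong t t' μ μ' hstep ih =>
      cases ht with
      | ref _ _ _ T₀ h1 =>
        obtain ⟨S', hp, ht', hμ'⟩ := ih _ h1 hμ
        exact ⟨S', hp, .ref _ _ _ _ ht', hμ'⟩
  | refV v μ hv =>
      cases ht with
      | ref _ _ _ T₀ h1 =>
        refine ⟨S ++ [T₀], List.prefix_append _ _, ?_, ?_⟩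
        · have he : μ.length = S.length := hμ.1
          have hl : μ.length < (S ++ [T₀]).length := by simp [he]
          have := HasType.loc emptyCtx (S ++ [T₀]) μ.length hl
          have hg : (S ++ [T₀])[μ.length]'hl = T₀ := by
            simp [he, List.getElem_concat_length]
          rwa [hg] at this
        · constructor
          · simp [hμ.1]
          · intro l h₁ h₂
            rcases Nat.lt_or_ge l μ.length with hlt | hge
            · have hS : l < S.length := hμ.1 ▸ hlt
              have hv' := hμ.2 l hlt hS
              rw [List.getElem_append_left hlt, List.getElem_append_left hS]
              exact ⟨hv'.1, store_weaken (List.prefix_append _ _) hv'.2⟩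
            · have hle : l = μ.length := by
                simp only [List.length_append, List.length_cons,
                  List.length_nil] at h₁
                omega
              subst hle
              have hg1 : (μ ++ [v])[μ.length]'h₁ = v :=
                List.getElem_concat_length rfl _
              have hg2 : (S ++ [T₀])[μ.length]'h₂ = T₀ := by
                simp [hμ.1, List.getElem_concat_length]
              rw [hg1, hg2]
              exact ⟨hv, store_weaken (List.prefix_append _ _) h1⟩
  | derefCong t t' μ μ' hstep ih =>
      cases ht with
      | deref _ _ _ T₀ h1 =>
        obtain ⟨S', hp, ht', hμ'⟩ := ih _ h1 hμ
        exact ⟨S', hp, .deref _ _ _ _ ht', hμ'⟩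
  | derefLoc μ l h =>
      cases ht with
      | deref _ _ _ T₀ h1 =>
        cases h1 with
        | loc _ _ _ hl =>
          exact ⟨S, List.prefix_refl S, (hμ.2 l h hl).2, hμ⟩
  | assign1 t₁ t₁' t₂ μ μ' hstep ih =>
      cases ht with
      | assign _ _ _ _ T₀ h1 h2 =>
        obtain ⟨S', hp, ht', hμ'⟩ := ih _ h1 hμ
        exact ⟨S', hp, .assign _ _ _ _ _ ht' (store_weaken hp h2), hμ'⟩
  | assign2 v₁ t₂ t₂' μ μ' hv hstep ih =>
      cases ht with
      | assign _ _ _ _ T₀ h1 h2 =>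
        obtain ⟨S', hp, ht', hμ'⟩ := ih _ h2 hμ
        exact ⟨S', hp, .assign _ _ _ _ _ (store_weaken hp h1) ht', hμ'⟩
  | assign l v μ hv hl =>
      cases ht with
      | assign _ _ _ _ T₀ h1 h2 =>
        cases h1 with
        | loc _ _ _ hlS =>
          refine ⟨S, List.prefix_refl S, .unit _ _, ?_, ?_⟩
          · simpa using hμ.1
          · intro k h₁ h₂
            have hk : k < μ.length := by simpa using h₁
            by_cases hkl : l = k
            · subst hkl
              rw [List.getElem_set_self]
              exact ⟨hv, h2⟩
            · rw [List.getElem_set_ne hkl]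
              exact hμ.2 k hk h₂
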